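/- Let K : ℝ² → ℝ be continuously differentiable and let V := (−∂K/∂x₂, ∂K/∂x₁). Let τ > 0, A ∈ ℝ, t₁ < t₂, and let ξ : [t₁, t₂] → ℝ² be continuously differentiable with |∇K(ξ(t))| ≤ τ for every t ∈ [t₁, t₂]. Then ∫_{t₁}^{t₂} |ξ'(t) − A·V(ξ(t))|² dt ≥ (K(ξ(t₂)) − K(ξ(t₁)))² / (τ² (t₂ − t₁)). -/

import Mathlib

open MeasureTheory intervalIntegral InnerProductSpace

open MeasureTheory intervalIntegral

lemma cs_aux {a b : ℝ} (hab : a < b) {f : ℝ → ℝ}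
    (hf : IntervalIntegrable f volume a b)
    (hf2 : IntervalIntegrable (fun t => f t ^ 2) volume a b) :
    (∫ t in a..b, f t) ^ 2 ≤ (b - a) * ∫ t in a..b, f t ^ 2 := by
  set I := ∫ t in a..b, f t with hI
  set J := ∫ t in a..b, f t ^ 2 with hJ
  have hba : (0:ℝ) < b - a := sub_pos.2 hab
  set c := I / (b - a) with hc
  have h0 : 0 ≤ ∫ t in a..b, (f t - c) ^ 2 :=
    intervalIntegral.integral_nonneg hab.le (fun t _ => sq_nonneg _)
  have hexp : (∫ t in a..b, (f t - c) ^ 2)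
      = J - (2*c) * I + (b - a) * c ^ 2 := by
    have : ∀ t ∈ Set.uIcc a b, (f t - c) ^ 2 = f t ^ 2 - (2*c) * f t + c ^ 2 := by
      intro t _; ring
    rw [intervalIntegral.integral_congr this,
      intervalIntegral.integral_add ((hf2.sub (hf.const_mul (2*c))))
        intervalIntegrable_const,
      intervalIntegral.integral_sub hf2 (hf.const_mul (2*c)),
      intervalIntegral.integral_const_mul, intervalIntegral.integral_const]
    simp only [smul_eq_mul]
    rw [hI, hJ]
  rw [hexp] at h0
  have hcI : c * (b - a) = I := div_mul_cancel₀ _ hba.ne'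
  nlinarith [h0, hcI, mul_le_mul_of_nonneg_left h0 hba.le]


/-- Let `K : ℝ² → ℝ` be `C¹` and `V = (−∂K/∂x₂, ∂K/∂x₁)`.  If
`ξ : [t₁, t₂] → ℝ²` is `C¹` with derivative `ξ'` and `|∇K(ξ(t))| ≤ τ` on `[t₁, t₂]`,
then `∫_{t₁}^{t₂} |ξ'(t) − A V(ξ(t))|² dt ≥ (K(ξ(t₂)) − K(ξ(t₁)))² / (τ²(t₂ − t₁))`. -/
theorem statement15 (K : EuclideanSpace ℝ (Fin 2) → ℝ) (hK : ContDiff ℝ 1 K)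
    (V : EuclideanSpace ℝ (Fin 2) → EuclideanSpace ℝ (Fin 2))
    (hV : ∀ y, V y 0 = -(gradient K y 1) ∧ V y 1 = gradient K y 0)
    (τ A t₁ t₂ : ℝ) (hτ : 0 < τ) (ht : t₁ < t₂)
    (ξ ξ' : ℝ → EuclideanSpace ℝ (Fin 2))
    (hderiv : ∀ t ∈ Set.Icc t₁ t₂, HasDerivAt ξ (ξ' t) t)
    (hcont : ContinuousOn ξ' (Set.Icc t₁ t₂))
    (hgrad : ∀ t ∈ Set.Icc t₁ t₂, ‖gradient K (ξ t)‖ ≤ τ) :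
    (∫ t in t₁..t₂, ‖ξ' t - A • V (ξ t)‖ ^ 2)
      ≥ (K (ξ t₂) - K (ξ t₁)) ^ 2 / (τ ^ 2 * (t₂ - t₁)) := by
  have huIcc : Set.uIcc t₁ t₂ = Set.Icc t₁ t₂ := Set.uIcc_of_le ht.le
  -- continuity of gradient
  have hgradcont : Continuous (gradient K) := by
    have : gradient K = fun y => (toDual ℝ (EuclideanSpace ℝ (Fin 2))).symm (fderiv ℝ K y) := rfl
    rw [this]
    exact (toDual ℝ _).symm.continuous.comp (hK.continuous_fderiv one_ne_zero)
  -- continuity of ξ on Icc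
  have hξcont : ContinuousOn ξ (Set.Icc t₁ t₂) := fun t htt =>
    ((hderiv t htt).continuousAt).continuousWithinAt
  -- continuity of V ∘ ξ
  have hVcont : Continuous V := by
    have hVeq : V = fun y => (WithLp.equiv 2 (Fin 2 → ℝ)).symm
        ![-(gradient K y 1), gradient K y 0] := by
      funext y
      ext i
      fin_cases i
      · simpa using (hV y).1
      · simpa using (hV y).2
    rw [hVeq]
    refine Continuous.comp (PiLp.continuous_toLp 2 _) ?_
    refine continuous_pi fun i => ?_
    fin_cases i
    · exact ((continuous_apply (1 : Fin 2)).comp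
        ((PiLp.continuous_ofLp 2 _).comp hgradcont)).neg
    · exact ((continuous_apply (0 : Fin 2)).comp
        ((PiLp.continuous_ofLp 2 _).comp hgradcont))
  -- w and h
  set w : ℝ → EuclideanSpace ℝ (Fin 2) := fun t => ξ' t - A • V (ξ t) with hw
  have hwcont : ContinuousOn w (Set.Icc t₁ t₂) :=
    hcont.sub (((hVcont.comp_continuousOn hξcont)).const_smul A)
  set h : ℝ → ℝ := fun t => inner ℝ (gradient K (ξ t)) (ξ' t) with hh
  have hhcont : ContinuousOn h (Set.Icc t₁ t₂) :=
    (hgradcont.comp_continuousOn hξcont).inner hcont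
  -- orthogonality: inner (gradient K y) (V y) = 0
  have horth : ∀ y, (inner ℝ (gradient K y) (V y) : ℝ) = 0 := by
    intro y
    rw [PiLp.inner_apply]
    simp only [RCLike.inner_apply, conj_trivial]
    rw [Fin.sum_univ_two, (hV y).1, (hV y).2]
    ring
  -- h t = inner (grad) (w t)
  have hhw : ∀ t, h t = inner ℝ (gradient K (ξ t)) (w t) := by
    intro t
    rw [hw]
    simp only [inner_sub_right, inner_smul_right, horth, mul_zero, sub_zero, hh]
  -- derivative of K ∘ ξ
  have hcomp : ∀ t ∈ Set.Icc t₁ t₂, HasDerivAt (fun s => K (ξ s)) (h t) t := by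
    intro t htt
    have h1 : HasGradientAt K (gradient K (ξ t)) (ξ t) :=
      (hK.differentiable one_ne_zero (ξ t)).hasGradientAt
    have h2 := h1.hasFDerivAt.comp_hasDerivAt t (hderiv t htt)
    simpa [toDual_apply_apply, hh, Function.comp_def] using h2
  -- integrability
  have hhint : IntervalIntegrable h volume t₁ t₂ := by
    apply ContinuousOn.intervalIntegrable; rwa [huIcc]
  have hh2int : IntervalIntegrable (fun t => h t ^ 2) volume t₁ t₂ := by
    apply ContinuousOn.intervalIntegrable
    rw [huIcc]; exact hhcont.pow 2
  have hw2int : IntervalIntegrable (fun t => ‖w t‖ ^ 2) volume t₁ t₂ := by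
    apply ContinuousOn.intervalIntegrable
    rw [huIcc]; exact (hwcont.norm).pow 2
  -- FTC
  have hftc : K (ξ t₂) - K (ξ t₁) = ∫ t in t₁..t₂, h t := by
    rw [intervalIntegral.integral_eq_sub_of_hasDerivAt (fun t htt => hcomp t (huIcc ▸ htt)) hhint]
  -- pointwise: h t ^ 2 ≤ τ^2 * ‖w t‖^2 on Icc
  have hpt : ∀ t ∈ Set.Icc t₁ t₂, h t ^ 2 ≤ τ ^ 2 * ‖w t‖ ^ 2 := by
    intro t htt
    have h1 : |h t| ≤ τ * ‖w t‖ := by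
      rw [hhw t]
      calc |(inner ℝ (gradient K (ξ t)) (w t) : ℝ)| ≤ ‖gradient K (ξ t)‖ * ‖w t‖ :=
            abs_real_inner_le_norm _ _
        _ ≤ τ * ‖w t‖ := by
            exact mul_le_mul_of_nonneg_right (hgrad t htt) (norm_nonneg _)
    have := mul_self_le_mul_self (abs_nonneg (h t)) h1
    calc h t ^ 2 = |h t| * |h t| := by rw [← sq_abs, sq]
      _ ≤ (τ * ‖w t‖) * (τ * ‖w t‖) := this
      _ = τ ^ 2 * ‖w t‖ ^ 2 := by ring
  -- put together
  have hcs : (∫ t in t₁..t₂, h t) ^ 2 ≤ (t₂ - t₁) * ∫ t in t₁..t₂, h t ^ 2 :=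
    cs_aux ht hhint hh2int
  have hmono : (∫ t in t₁..t₂, h t ^ 2) ≤ ∫ t in t₁..t₂, τ ^ 2 * ‖w t‖ ^ 2 := by
    apply intervalIntegral.integral_mono_on ht.le hh2int (hw2int.const_mul _) hpt
  rw [intervalIntegral.integral_const_mul] at hmono
  have hpos : 0 < τ ^ 2 * (t₂ - t₁) := mul_pos (pow_pos hτ 2) (sub_pos.2 ht)
  rw [ge_iff_le, div_le_iff₀ hpos]
  rw [hftc]
  calc (∫ t in t₁..t₂, h t) ^ 2 ≤ (t₂ - t₁) * ∫ t in t₁..t₂, h t ^ 2 := hcs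
    _ ≤ (t₂ - t₁) * (τ ^ 2 * ∫ t in t₁..t₂, ‖w t‖ ^ 2) :=
        mul_le_mul_of_nonneg_left hmono (sub_pos.2 ht).le
    _ = (∫ t in t₁..t₂, ‖w t‖ ^ 2) * (τ ^ 2 * (t₂ - t₁)) := by ring
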